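/- Let K be a field of characteristic p > 0, let r ∈ K be a primitive n-th root of unity with r ≠ 1, let α = 2r, β = −r², γ ∈ K, and let A = A(α, β, γ). Set z = du − r·ud + γ/(r−1). Then the elements d^{np}, u^{np}, and zⁿ are central in A, and A is a finitely generated module over the central subalgebra Z′ generated by d^{np}, u^{np}, zⁿ. -/

import Mathlib

noncomputable section

open FreeAlgebra

/-- Defining relations of the down-up algebra `A(α, β, γ)`: the generator `ι K 0`
plays the role of `d` and `ι K 1` plays the role of `u`. -/
inductive DownUpRel (K : Type) [Field K] (α β γ : K) :
    FreeAlgebra K (Fin 2) → FreeAlgebra K (Fin 2) → Prop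
  | rel1 : DownUpRel K α β γ
      (ι K (0 : Fin 2) * ι K (0 : Fin 2) * ι K (1 : Fin 2))
      (α • (ι K (0 : Fin 2) * ι K (1 : Fin 2) * ι K (0 : Fin 2)) +
        β • (ι K (1 : Fin 2) * ι K (0 : Fin 2) * ι K (0 : Fin 2)) +
        γ • ι K (0 : Fin 2))
  | rel2 : DownUpRel K α β γ
      (ι K (0 : Fin 2) * ι K (1 : Fin 2) * ι K (1 : Fin 2))
      (α • (ι K (1 : Fin 2) * ι K (0 : Fin 2) * ι K (1 : Fin 2)) +
        β • (ι K (1 : Fin 2) * ι K (1 : Fin 2) * ι K (0 : Fin 2)) +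
        γ • ι K (1 : Fin 2))

/-- The down-up algebra `A(α, β, γ)`. -/
abbrev DownUpAlgebra (K : Type) [Field K] (α β γ : K) : Type :=
  RingQuot (DownUpRel K α β γ)

/-- The generator `d` of the down-up algebra. -/
def DownUpAlgebra.d (K : Type) [Field K] (α β γ : K) : DownUpAlgebra K α β γ :=
  RingQuot.mkAlgHom K (DownUpRel K α β γ) (ι K (0 : Fin 2))

/-- The generator `u` of the down-up algebra. -/
def DownUpAlgebra.u (K : Type) [Field K] (α β γ : K) : DownUpAlgebra K α β γ :=
  RingQuot.mkAlgHom K (DownUpRel K α β γ) (ι K (1 : Fin 2))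

namespace DUAux

variable {K : Type} [Field K] (r γ : K)

local notation "A" => DownUpAlgebra K (2*r) (-(r^2)) γ
local notation "dd" => DownUpAlgebra.d K (2*r) (-(r^2)) γ
local notation "uu" => DownUpAlgebra.u K (2*r) (-(r^2)) γ
local notation "zz" => dd * uu - r • (uu * dd) + algebraMap K A (γ/(r-1))

lemma rel1' : dd * dd * uu =
    (2*r) • (dd * uu * dd) + (-(r^2)) • (uu * dd * dd) + γ • dd := by
  have h := RingQuot.mkAlgHom_rel K (DownUpRel.rel1 (K := K) (α := 2*r) (β := -(r^2)) (γ := γ))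
  simpa only [map_add, map_mul, map_smul, DownUpAlgebra.d, DownUpAlgebra.u] using h

lemma rel2' : dd * uu * uu =
    (2*r) • (uu * dd * uu) + (-(r^2)) • (uu * uu * dd) + γ • uu := by
  have h := RingQuot.mkAlgHom_rel K (DownUpRel.rel2 (K := K) (α := 2*r) (β := -(r^2)) (γ := γ))
  simpa only [map_add, map_mul, map_smul, DownUpAlgebra.d, DownUpAlgebra.u] using h

lemma adjoin_du_top : Algebra.adjoin K {(dd : A), uu} = ⊤ := by
  rw [eq_top_iff]
  rintro a -
  obtain ⟨x, rfl⟩ := RingQuot.mkAlgHom_surjective K (DownUpRel K (2*r) (-(r^2)) γ) a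
  induction x using FreeAlgebra.induction with
  | grade0 k => simpa using Subalgebra.algebraMap_mem _ k
  | grade1 i =>
    fin_cases i
    · exact Algebra.subset_adjoin (by left; rfl)
    · exact Algebra.subset_adjoin (by right; rfl)
  | mul x y hx hy => rw [map_mul]; exact mul_mem hx hy
  | add x y hx hy => rw [map_add]; exact add_mem hx hy

lemma mem_center_of (x : A) (hd : x * dd = dd * x) (hu : x * uu = uu * x) :
    x ∈ Subalgebra.center K A := by
  rw [Subalgebra.mem_center_iff]
  intro a
  have ha : a ∈ Algebra.adjoin K {(dd : A), uu} := by rw [adjoin_du_top]; trivial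
  induction ha using Algebra.adjoin_induction with
  | mem y hy =>
    rcases hy with h | h <;> subst h
    · exact hd.symm
    · exact hu.symm
  | algebraMap k => rw [Algebra.commutes]
  | add y w hy hw h1 h2 => rw [add_mul, mul_add, h1, h2]
  | mul y w hy hw h1 h2 => rw [mul_assoc, h2, ← mul_assoc, h1, mul_assoc]

end DUAux

namespace DUAux
variable {K : Type} [Field K] (r γ : K)
local notation "A" => DownUpAlgebra K (2*r) (-(r^2)) γ
local notation "dd" => DownUpAlgebra.d K (2*r) (-(r^2)) γ
local notation "uu" => DownUpAlgebra.u K (2*r) (-(r^2)) γ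

def zel : A := dd * uu - r • (uu * dd) + algebraMap K A (γ/(r-1))

local notation "Z" => zel r γ

lemma d_u : dd * uu = r • (uu * dd) + Z - algebraMap K A (γ/(r-1)) := by
  unfold zel; abel

lemma d_z (hr1 : r ≠ 1) : dd * Z = r • (Z * dd) := by
  have hne : r - 1 ≠ 0 := sub_ne_zero.mpr hr1
  have h1 := rel1' (K := K) r γ
  rw [mul_assoc] at h1
  unfold zel
  simp only [Algebra.algebraMap_eq_smul_one, mul_sub, sub_mul, mul_add, add_mul,
    smul_mul_assoc, mul_smul_comm, smul_smul, smul_sub, smul_add, mul_one, one_mul, mul_assoc]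
  rw [h1]
  simp only [smul_mul_assoc, mul_smul_comm, smul_smul, smul_add, mul_assoc]
  match_scalars <;> first | ring1 | (field_simp; try ring1)

lemma z_u (hr1 : r ≠ 1) : Z * uu = r • (uu * Z) := by
  have hne : r - 1 ≠ 0 := sub_ne_zero.mpr hr1
  have h2 := rel2' (K := K) r γ
  rw [mul_assoc] at h2
  unfold zel
  simp only [Algebra.algebraMap_eq_smul_one, mul_sub, sub_mul, mul_add, add_mul,
    smul_mul_assoc, mul_smul_comm, smul_smul, smul_sub, smul_add, mul_one, one_mul, mul_assoc]
  rw [h2]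
  simp only [smul_mul_assoc, mul_smul_comm, smul_smul, smul_add, mul_assoc]
  match_scalars <;> first | ring1 | (field_simp; try ring1)

lemma d_zpow (hr1 : r ≠ 1) (j : ℕ) : dd * Z^j = (r^j) • (Z^j * dd) := by
  induction j with
  | zero => simp
  | succ j ih =>
    rw [pow_succ (zel r γ) j, ← mul_assoc, ih, smul_mul_assoc, mul_assoc, d_z r γ hr1,
      mul_smul_comm, smul_smul, ← mul_assoc, ← pow_succ (zel r γ) j, ← pow_succ r j]

lemma zpow_u (hr1 : r ≠ 1) (j : ℕ) : Z^j * uu = (r^j) • (uu * Z^j) := by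
  induction j with
  | zero => simp
  | succ j ih =>
    rw [pow_succ' (zel r γ) j, mul_assoc, ih, mul_smul_comm, ← mul_assoc, z_u r γ hr1,
      smul_mul_assoc, smul_smul, mul_assoc, ← pow_succ' (zel r γ) j, ← pow_succ r j]

lemma d_upow (hr1 : r ≠ 1) (k : ℕ) :
    dd * uu^(k+1) = (r^(k+1)) • (uu^(k+1) * dd) + (((k:K)+1) * r^k) • (uu^k * Z) +
      (-(∑ i ∈ Finset.range (k+1), r^i) * (γ/(r-1))) • uu^k := by
  induction k with
  | zero =>
    simp only [pow_one, pow_zero, one_mul, mul_one, Nat.cast_zero, zero_add,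
      Finset.range_one, Finset.sum_singleton, Algebra.algebraMap_eq_smul_one]
    rw [d_u]
    simp only [Algebra.algebraMap_eq_smul_one]
    module
  | succ k ih =>
    calc dd * uu^(k+2) = (dd * uu^(k+1)) * uu := by rw [pow_succ _ (k+1), ← mul_assoc]
      _ = ((r^(k+1)) • (uu^(k+1) * dd) + (((k:K)+1) * r^k) • (uu^k * Z) +
          (-(∑ i ∈ Finset.range (k+1), r^i) * (γ/(r-1))) • uu^k) * uu := by rw [ih]
      _ = (r^(k+1)) • (uu^(k+1) * (dd * uu)) + (((k:K)+1) * r^k) • (uu^k * (Z * uu)) +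
          (-(∑ i ∈ Finset.range (k+1), r^i) * (γ/(r-1))) • (uu^k * uu) := by
          simp only [add_mul, smul_mul_assoc, mul_assoc]
      _ = (r^(k+1)) • (uu^(k+1) * (r • (uu * dd) + Z - algebraMap K A (γ/(r-1)))) +
          (((k:K)+1) * r^k) • (uu^k * (r • (uu * Z))) +
          (-(∑ i ∈ Finset.range (k+1), r^i) * (γ/(r-1))) • (uu^k * uu) := by
          rw [d_u, z_u r γ hr1]
      _ = _ := by
          simp only [mul_add, mul_sub, mul_smul_comm, smul_add, smul_sub, smul_smul,
            Algebra.algebraMap_eq_smul_one, mul_one, pow_succ uu, mul_assoc,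
            Finset.sum_range_succ, add_mul]
          match_scalars <;> (push_cast; ring1)

lemma dpow_u (hr1 : r ≠ 1) (k : ℕ) :
    dd^(k+1) * uu = (r^(k+1)) • (uu * dd^(k+1)) + (((k:K)+1) * r^k) • (Z * dd^k) +
      (-(∑ i ∈ Finset.range (k+1), r^i) * (γ/(r-1))) • dd^k := by
  induction k with
  | zero =>
    simp only [pow_one, pow_zero, one_mul, mul_one, Nat.cast_zero, zero_add,
      Finset.range_one, Finset.sum_singleton, Algebra.algebraMap_eq_smul_one]
    rw [d_u]
    simp only [Algebra.algebraMap_eq_smul_one]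
    module
  | succ k ih =>
    calc dd^(k+2) * uu = dd * (dd^(k+1) * uu) := by rw [pow_succ' _ (k+1), mul_assoc]
      _ = dd * ((r^(k+1)) • (uu * dd^(k+1)) + (((k:K)+1) * r^k) • (Z * dd^k) +
          (-(∑ i ∈ Finset.range (k+1), r^i) * (γ/(r-1))) • dd^k) := by rw [ih]
      _ = (r^(k+1)) • ((dd * uu) * dd^(k+1)) + (((k:K)+1) * r^k) • ((dd * Z) * dd^k) +
          (-(∑ i ∈ Finset.range (k+1), r^i) * (γ/(r-1))) • (dd * dd^k) := by
          simp only [mul_add, mul_smul_comm, mul_assoc]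
      _ = (r^(k+1)) • ((r • (uu * dd) + Z - algebraMap K A (γ/(r-1))) * dd^(k+1)) +
          (((k:K)+1) * r^k) • ((r • (Z * dd)) * dd^k) +
          (-(∑ i ∈ Finset.range (k+1), r^i) * (γ/(r-1))) • (dd * dd^k) := by
          rw [d_u, d_z r γ hr1]
      _ = _ := by
          simp only [add_mul, sub_mul, smul_mul_assoc, smul_add, smul_sub, smul_smul,
            Algebra.algebraMap_eq_smul_one, one_mul, pow_succ' dd, mul_assoc,
            Finset.sum_range_succ, mul_add, mul_smul_comm]
          match_scalars <;> (push_cast; ring1)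

end DUAux

namespace DUAux
variable {K : Type} [Field K] (r γ : K)
local notation "A" => DownUpAlgebra K (2*r) (-(r^2)) γ
local notation "dd" => DownUpAlgebra.d K (2*r) (-(r^2)) γ
local notation "uu" => DownUpAlgebra.u K (2*r) (-(r^2)) γ
local notation "Z" => zel r γ

lemma dpow_central (hr1 : r ≠ 1) (N : ℕ) (hN : 0 < N) (hrN : r^N = 1) (hNK : (N : K) = 0) :
    dd^N ∈ Subalgebra.center K A := by
  obtain ⟨m, rfl⟩ : ∃ m, N = m + 1 := ⟨N-1, by omega⟩
  apply mem_center_of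
  · rw [← pow_succ, ← pow_succ']
  · have h := dpow_u r γ hr1 m
    have hsum : (∑ i ∈ Finset.range (m+1), r^i) = 0 := by
      rw [geom_sum_eq hr1 (m+1), hrN]; simp
    have hm : ((m:K)+1) = 0 := by exact_mod_cast hNK
    rw [h, hrN, hsum, hm]
    simp

lemma upow_central (hr1 : r ≠ 1) (N : ℕ) (hN : 0 < N) (hrN : r^N = 1) (hNK : (N : K) = 0) :
    uu^N ∈ Subalgebra.center K A := by
  obtain ⟨m, rfl⟩ : ∃ m, N = m + 1 := ⟨N-1, by omega⟩
  apply mem_center_of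
  · have h := d_upow r γ hr1 m
    have hsum : (∑ i ∈ Finset.range (m+1), r^i) = 0 := by
      rw [geom_sum_eq hr1 (m+1), hrN]; simp
    have hm : ((m:K)+1) = 0 := by exact_mod_cast hNK
    rw [h, hrN, hsum, hm]
    simp
  · rw [← pow_succ, ← pow_succ']

lemma zpow_central (hr1 : r ≠ 1) (n : ℕ) (hrn : r^n = 1) :
    Z^n ∈ Subalgebra.center K A := by
  apply mem_center_of
  · rw [d_zpow r γ hr1 n, hrn, one_smul]
  · rw [zpow_u r γ hr1 n, hrn, one_smul]
end DUAux

namespace DUAux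
open DownUpAlgebra
variable {K : Type} [Field K] (r γ : K)
local notation "A" => DownUpAlgebra K (2*r) (-(r^2)) γ
local notation "dd" => DownUpAlgebra.d K (2*r) (-(r^2)) γ
local notation "uu" => DownUpAlgebra.u K (2*r) (-(r^2)) γ
local notation "Z" => zel r γ

lemma finite_over (hr1 : r ≠ 1) (N n : ℕ) (hN : 0 < N) (hn : 0 < n)
    (hDc : dd^N ∈ Subalgebra.center K A) (hUc : uu^N ∈ Subalgebra.center K A)
    (hZc : Z^n ∈ Subalgebra.center K A) :
    Module.Finite (Algebra.adjoin K ({dd^N, uu^N, Z^n} : Set A)) A := by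
  set B : Subalgebra K A := Algebra.adjoin K ({dd^N, uu^N, Z^n} : Set A) with hB
  -- B is central
  have hBle : B ≤ Subalgebra.center K A := by
    apply Algebra.adjoin_le
    rintro x (rfl | rfl | rfl)
    · exact hDc
    · exact hUc
    · exact hZc
  have hDmem : dd^N ∈ B := Algebra.subset_adjoin (by left; rfl)
  have hUmem : uu^N ∈ B := Algebra.subset_adjoin (by right; left; rfl)
  have hZmem : Z^n ∈ B := Algebra.subset_adjoin (by right; right; rfl)
  -- the spanning set
  set f : Fin N × Fin n × Fin N → A := fun t => uu^(t.1 : ℕ) * (Z^(t.2.1 : ℕ) * dd^(t.2.2 : ℕ))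
    with hf
  set M : Submodule B A := Submodule.span B (Set.range f) with hM
  -- smul facts
  have hsmul : ∀ (b : A) (hb : b ∈ B) (x : A), (⟨b, hb⟩ : B) • x = b * x := fun b hb x => rfl
  have hksm : ∀ (c : K) (x : A), x ∈ M → c • x ∈ M := by
    intro c x hx
    have : c • x = (⟨algebraMap K A c, B.algebraMap_mem c⟩ : B) • x := by
      rw [hsmul, Algebra.smul_def]
    rw [this]
    exact M.smul_mem _ hx
  have hcomm : ∀ (b : A), b ∈ B → ∀ y : A, b * y = y * b := by
    intro b hb y
    exact (Subalgebra.mem_center_iff.mp (hBle hb) y).symm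
  -- all monomials lie in M
  have hmono : ∀ (m i j k : ℕ), i + j + k ≤ m → uu^i * (Z^j * dd^k) ∈ M := by
    intro m
    induction m with
    | zero =>
      intro i j k hle
      obtain ⟨rfl, rfl, rfl⟩ : i = 0 ∧ j = 0 ∧ k = 0 := by omega
      exact Submodule.subset_span ⟨(⟨0, hN⟩, ⟨0, hn⟩, ⟨0, hN⟩), rfl⟩
    | succ m ih =>
      intro i j k hle
      by_cases hiN : N ≤ i
      · have hi : uu^i = uu^N * uu^(i-N) := by rw [← pow_add]; congr 1; omega
        have : uu^i * (Z^j * dd^k) = uu^N * (uu^(i-N) * (Z^j * dd^k)) := by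
          rw [hi, mul_assoc]
        rw [this, ← hsmul _ hUmem]
        exact M.smul_mem _ (ih (i-N) j k (by omega))
      · by_cases hjn : n ≤ j
        · have hj : Z^j = Z^n * Z^(j-n) := by rw [← pow_add]; congr 1; omega
          have : uu^i * (Z^j * dd^k) = Z^n * (uu^i * (Z^(j-n) * dd^k)) := by
            rw [hj, mul_assoc, ← mul_assoc (uu^i), ← hcomm _ hZmem (uu^i), mul_assoc]
          rw [this, ← hsmul _ hZmem]
          exact M.smul_mem _ (ih i (j-n) k (by omega))
        · by_cases hkN : N ≤ k
          · have hk : dd^k = dd^(k-N) * dd^N := by rw [← pow_add]; congr 1; omega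
            have : uu^i * (Z^j * dd^k) = dd^N * (uu^i * (Z^j * dd^(k-N))) :=
              calc uu^i * (Z^j * dd^k) = (uu^i * (Z^j * dd^(k-N))) * dd^N := by
                    rw [hk]; simp only [mul_assoc]
                _ = dd^N * (uu^i * (Z^j * dd^(k-N))) := (hcomm _ hDmem _).symm
            rw [this, ← hsmul _ hDmem]
            exact M.smul_mem _ (ih i j (k-N) (by omega))
          · exact Submodule.subset_span
              ⟨(⟨i, by omega⟩, ⟨j, by omega⟩, ⟨k, by omega⟩), rfl⟩
  have hmono' : ∀ i j k : ℕ, uu^i * (Z^j * dd^k) ∈ M := fun i j k =>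
    hmono (i+j+k) i j k le_rfl
  -- closure of M under left multiplication by generators
  have hdw : ∀ j k : ℕ, dd * (Z^j * dd^k) = (r^j) • (Z^j * dd^(k+1)) := by
    intro j k
    rw [← mul_assoc, d_zpow r γ hr1, smul_mul_assoc, mul_assoc, ← pow_succ']
  have hugen : ∀ x ∈ M, uu * x ∈ M := by
    intro x hx
    induction hx using Submodule.span_induction with
    | mem g hg =>
      obtain ⟨⟨i, j, k⟩, rfl⟩ := hg
      rw [hf]
      rw [← mul_assoc, ← pow_succ']
      exact hmono' _ _ _
    | zero => rw [mul_zero]; exact M.zero_mem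
    | add y w hy hw h1 h2 => rw [mul_add]; exact M.add_mem h1 h2
    | smul b y hy h1 =>
      have : uu * (b • y) = b • (uu * y) := by
        obtain ⟨b, hb⟩ := b
        rw [hsmul, hsmul, ← mul_assoc, ← hcomm _ hb uu, mul_assoc]
      rw [this]
      exact M.smul_mem _ h1
  have hdgen : ∀ x ∈ M, dd * x ∈ M := by
    intro x hx
    induction hx using Submodule.span_induction with
    | mem g hg =>
      obtain ⟨⟨i, j, k⟩, rfl⟩ := hg
      rw [hf]
      simp only
      by_cases hi0 : (i : ℕ) = 0
      · rw [hi0, pow_zero, one_mul, hdw]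
        have h0 := hmono' 0 (j : ℕ) ((k : ℕ)+1)
        rw [pow_zero, one_mul] at h0
        exact hksm _ _ h0
      · obtain ⟨s, hs⟩ : ∃ s, (i : ℕ) = s + 1 := ⟨(i : ℕ) - 1, by omega⟩
        rw [hs]
        have key : dd * (uu^(s+1) * (Z^(j:ℕ) * dd^(k:ℕ))) =
            (r^(s+1) * r^(j:ℕ)) • (uu^(s+1) * (Z^(j:ℕ) * dd^((k:ℕ)+1))) +
            (((s:K)+1) * r^s) • (uu^s * (Z^((j:ℕ)+1) * dd^(k:ℕ))) +
            (-(∑ i ∈ Finset.range (s+1), r^i) * (γ/(r-1))) • (uu^s * (Z^(j:ℕ) * dd^(k:ℕ))) := by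
          calc dd * (uu^(s+1) * (Z^(j:ℕ) * dd^(k:ℕ)))
              = (dd * uu^(s+1)) * (Z^(j:ℕ) * dd^(k:ℕ)) := by rw [mul_assoc]
            _ = ((r^(s+1)) • (uu^(s+1) * dd) + (((s:K)+1) * r^s) • (uu^s * Z) +
                (-(∑ i ∈ Finset.range (s+1), r^i) * (γ/(r-1))) • uu^s) *
                  (Z^(j:ℕ) * dd^(k:ℕ)) := by rw [d_upow r γ hr1]
            _ = (r^(s+1)) • (uu^(s+1) * (dd * (Z^(j:ℕ) * dd^(k:ℕ)))) +
                (((s:K)+1) * r^s) • (uu^s * (Z * (Z^(j:ℕ) * dd^(k:ℕ)))) +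
                (-(∑ i ∈ Finset.range (s+1), r^i) * (γ/(r-1))) •
                  (uu^s * (Z^(j:ℕ) * dd^(k:ℕ))) := by
                simp only [add_mul, smul_mul_assoc, mul_assoc]
            _ = _ := by
                rw [hdw, ← mul_assoc (zel r γ), ← pow_succ' (zel r γ), mul_smul_comm, smul_smul]
        rw [key]
        exact M.add_mem (M.add_mem (hksm _ _ (hmono' _ _ _)) (hksm _ _ (hmono' _ _ _)))
          (hksm _ _ (hmono' _ _ _))
    | zero => rw [mul_zero]; exact M.zero_mem
    | add y w hy hw h1 h2 => rw [mul_add]; exact M.add_mem h1 h2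
    | smul b y hy h1 =>
      have : dd * (b • y) = b • (dd * y) := by
        obtain ⟨b, hb⟩ := b
        rw [hsmul, hsmul, ← mul_assoc, ← hcomm _ hb dd, mul_assoc]
      rw [this]
      exact M.smul_mem _ h1
  -- the subalgebra of left multipliers preserving M
  have hone : (1 : A) ∈ M := by
    have := hmono' 0 0 0
    simpa using this
  have htop : ∀ a : A, a ∈ M := by
    have hT : ∀ a : A, ∀ x ∈ M, a * x ∈ M := by
      set T : Subalgebra K A :=
        { carrier := {a : A | ∀ x ∈ M, a * x ∈ M}
          mul_mem' := fun {a b} ha hb x hx => by rw [mul_assoc]; exact ha _ (hb _ hx)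
          one_mem' := fun x hx => by rw [one_mul]; exact hx
          add_mem' := fun {a b} ha hb x hx => by rw [add_mul]; exact M.add_mem (ha _ hx) (hb _ hx)
          zero_mem' := fun x hx => by rw [zero_mul]; exact M.zero_mem
          algebraMap_mem' := fun c x hx => by
            rw [← Algebra.smul_def]; exact hksm c x hx } with hT
      intro a
      have haT : a ∈ T := by
        have hle : Algebra.adjoin K {(dd : A), uu} ≤ T :=
          Algebra.adjoin_le (by rintro y (rfl | rfl); exacts [hdgen, hugen])
        have : a ∈ Algebra.adjoin K {(dd : A), uu} := by rw [adjoin_du_top]; trivial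
        exact hle this
      exact haT
    intro a
    have := hT a 1 hone
    simpa using this
  classical
  constructor
  refine ⟨Finset.image f Finset.univ, ?_⟩
  rw [Finset.coe_image, Finset.coe_univ, Set.image_univ]
  rw [eq_top_iff]
  rintro a -
  exact htop a

end DUAux

/-- Let `K` have characteristic `p > 0`, let `r ≠ 1` be a primitive `n`-th root of
unity, and let `A = A(2r, -r², γ)`.  With `z = du - r·ud + γ/(r-1)`, the elements
`d^(np)`, `u^(np)` and `zⁿ` are central in `A`, and `A` is a finitely generated module
over the central subalgebra `Z' = K⟨d^(np), u^(np), zⁿ⟩`. -/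
theorem downUp_charP_finite_over_center (K : Type) [Field K] (p : ℕ) (hp : p ≠ 0)
    [CharP K p] (n : ℕ) (hn : 0 < n) (r : K) (hr : IsPrimitiveRoot r n) (hr1 : r ≠ 1)
    (γ : K) :
    DownUpAlgebra.d K (2 * r) (-(r ^ 2)) γ ^ (n * p) ∈
      Subalgebra.center K (DownUpAlgebra K (2 * r) (-(r ^ 2)) γ) ∧
    DownUpAlgebra.u K (2 * r) (-(r ^ 2)) γ ^ (n * p) ∈
      Subalgebra.center K (DownUpAlgebra K (2 * r) (-(r ^ 2)) γ) ∧
    (DownUpAlgebra.d K (2 * r) (-(r ^ 2)) γ * DownUpAlgebra.u K (2 * r) (-(r ^ 2)) γ -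
        r • (DownUpAlgebra.u K (2 * r) (-(r ^ 2)) γ * DownUpAlgebra.d K (2 * r) (-(r ^ 2)) γ) +
        algebraMap K (DownUpAlgebra K (2 * r) (-(r ^ 2)) γ) (γ / (r - 1))) ^ n ∈
      Subalgebra.center K (DownUpAlgebra K (2 * r) (-(r ^ 2)) γ) ∧
    Module.Finite
      (Algebra.adjoin K
        ({DownUpAlgebra.d K (2 * r) (-(r ^ 2)) γ ^ (n * p),
          DownUpAlgebra.u K (2 * r) (-(r ^ 2)) γ ^ (n * p),
          (DownUpAlgebra.d K (2 * r) (-(r ^ 2)) γ * DownUpAlgebra.u K (2 * r) (-(r ^ 2)) γ -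
            r • (DownUpAlgebra.u K (2 * r) (-(r ^ 2)) γ * DownUpAlgebra.d K (2 * r) (-(r ^ 2)) γ) +
            algebraMap K (DownUpAlgebra K (2 * r) (-(r ^ 2)) γ) (γ / (r - 1))) ^ n} :
          Set (DownUpAlgebra K (2 * r) (-(r ^ 2)) γ)))
      (DownUpAlgebra K (2 * r) (-(r ^ 2)) γ) := by
  have hN : 0 < n * p := Nat.mul_pos hn (Nat.pos_of_ne_zero hp)
  have hrN : r ^ (n * p) = 1 := by rw [pow_mul, hr.pow_eq_one, one_pow]
  have hNK : ((n * p : ℕ) : K) = 0 := by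
    have hpK : ((p : ℕ) : K) = 0 := CharP.cast_eq_zero K p
    push_cast
    rw [hpK, mul_zero]
  have h1 := DUAux.dpow_central r γ hr1 (n * p) hN hrN hNK
  have h2 := DUAux.upow_central r γ hr1 (n * p) hN hrN hNK
  have h3 := DUAux.zpow_central r γ hr1 n hr.pow_eq_one
  exact ⟨h1, h2, h3, DUAux.finite_over r γ hr1 (n * p) n hN hn h1 h2 h3⟩

end
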